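/- arXiv:1907.02826 — 3 statements merged into one kernel-verified Lean document; each statement's English description precedes it below -/
import Mathlib

section
/- Let 0 < a < b and let V'(x) = γ + β/(1+x) - (α-1)/x. Then the pair of conditions (1/π)∫_a^b V'(x)/√((b-x)(x-a)) dx = 0 and (1/π)∫_a^b x·V'(x)/√((b-x)(x-a)) dx = 2 is equivalent to the system: γ + β/√((a+1)(b+1)) - (α-1)/√(ab) = 0 and γ(a+b)/2 - α + 1 + β - β/√((a+1)(b+1)) = 2. -/
open Real intervalIntegral MeasureTheory Set

/-- FTC helper: monotone antiderivative gives integrability + value. -/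
lemma ftc_aux {f f' : ℝ → ℝ} {a b : ℝ} (hab : a ≤ b)
    (hc : ContinuousOn f (Icc a b))
    (hd : ∀ x ∈ Ioo a b, HasDerivAt f (f' x) x)
    (hpos : ∀ x ∈ Ioo a b, 0 ≤ f' x) :
    IntervalIntegrable f' volume a b ∧ ∫ x in a..b, f' x = f b - f a := by
  have hint : IntervalIntegrable f' volume a b := by
    apply intervalIntegrable_deriv_of_nonneg (g := f)
    · rwa [uIcc_of_le hab]
    · simpa [min_eq_left hab, max_eq_right hab] using hd
    · simpa [min_eq_left hab, max_eq_right hab] using hpos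
  exact ⟨hint, integral_eq_sub_of_hasDeriv_right_of_le hab hc
    (fun x hx => (hd x hx).hasDerivWithinAt) hint⟩

lemma sqrt_aux {a b x : ℝ} (hab : a < b) (hx : x ∈ Ioo a b) :
    Real.sqrt (1 - ((2*x - a - b)/(b - a))^2)
      = 2 * Real.sqrt ((b - x)*(x - a)) / (b - a) := by
  have hba : (0:ℝ) < b - a := by linarith [hx.1, hx.2, hab]
  have h1 : 1 - ((2*x - a - b)/(b - a))^2 = (2/(b-a))^2 * ((b - x)*(x - a)) := by
    field_simp; ring
  rw [h1, Real.sqrt_mul (sq_nonneg _), Real.sqrt_sq (by positivity)]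
  ring

lemma int_one {a b : ℝ} (hab : a < b) :
    IntervalIntegrable (fun x => 1 / Real.sqrt ((b - x)*(x - a))) volume a b ∧
    ∫ x in a..b, 1 / Real.sqrt ((b - x)*(x - a)) = Real.pi := by
  have hba : (0:ℝ) < b - a := by linarith
  set f : ℝ → ℝ := fun x => Real.arcsin ((2*x - a - b)/(b - a)) with hf
  have hc : ContinuousOn f (Icc a b) := by
    apply Real.continuous_arcsin.comp_continuousOn
    fun_prop (disch := intro x _; positivity)
  have hd : ∀ x ∈ Ioo a b, HasDerivAt f (1 / Real.sqrt ((b - x)*(x - a))) x := by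
    intro x hx
    have hq : (0:ℝ) < (b - x)*(x - a) := by
      have := hx.1; have := hx.2; nlinarith
    have hu1 : (2*x - a - b)/(b - a) ≠ -1 := by
      intro h; rw [div_eq_iff (by positivity)] at h; nlinarith [hx.1]
    have hu2 : (2*x - a - b)/(b - a) ≠ 1 := by
      intro h; rw [div_eq_iff (by positivity)] at h; nlinarith [hx.2]
    have hlin : HasDerivAt (fun x : ℝ => (2*x - a - b)/(b - a)) (2/(b-a)) x := by
      have : HasDerivAt (fun x : ℝ => (2*x - a - b)) 2 x := by
        have h := ((hasDerivAt_id x).const_mul 2).sub_const (a + b)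
        simpa [sub_sub] using h
      simpa [div_eq_mul_inv] using this.div_const (b - a)
    have := (Real.hasDerivAt_arcsin hu1 hu2).comp x hlin
    refine this.congr_deriv ?_
    symm
    rw [sqrt_aux hab hx]
    have hs : (0:ℝ) < Real.sqrt ((b - x)*(x - a)) := Real.sqrt_pos.2 hq
    field_simp
  have hpos : ∀ x ∈ Ioo a b, 0 ≤ 1 / Real.sqrt ((b - x)*(x - a)) := by
    intro x _; positivity
  obtain ⟨hi, hv⟩ := ftc_aux hab.le hc hd hpos
  refine ⟨hi, ?_⟩
  rw [hv, hf]
  have e1 : (2*b - a - b)/(b - a) = 1 := by field_simp; ring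
  have e2 : (2*a - a - b)/(b - a) = -1 := by field_simp; ring
  simp [e1, e2, Real.arcsin_one, Real.arcsin_neg_one]

lemma int_x {a b : ℝ} (ha : 0 < a) (hab : a < b) :
    IntervalIntegrable (fun x => x / Real.sqrt ((b - x)*(x - a))) volume a b ∧
    ∫ x in a..b, x / Real.sqrt ((b - x)*(x - a)) = Real.pi * (a + b) / 2 := by
  have hba : (0:ℝ) < b - a := by linarith
  set f : ℝ → ℝ := fun x =>
    -Real.sqrt ((b - x)*(x - a)) + ((a+b)/2) * Real.arcsin ((2*x - a - b)/(b - a)) with hf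
  have hc : ContinuousOn f (Icc a b) := by
    apply ContinuousOn.add
    · apply ContinuousOn.neg
      apply Real.continuous_sqrt.comp_continuousOn; fun_prop
    · apply ContinuousOn.mul continuousOn_const
      apply Real.continuous_arcsin.comp_continuousOn
      fun_prop (disch := intro x _; positivity)
  have hd : ∀ x ∈ Ioo a b, HasDerivAt f (x / Real.sqrt ((b - x)*(x - a))) x := by
    intro x hx
    have hq : (0:ℝ) < (b - x)*(x - a) := by
      have := hx.1; have := hx.2; nlinarith
    have hu1 : (2*x - a - b)/(b - a) ≠ -1 := by
      intro h; rw [div_eq_iff (by positivity)] at h; nlinarith [hx.1]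
    have hu2 : (2*x - a - b)/(b - a) ≠ 1 := by
      intro h; rw [div_eq_iff (by positivity)] at h; nlinarith [hx.2]
    have hlin : HasDerivAt (fun x : ℝ => (2*x - a - b)/(b - a)) (2/(b-a)) x := by
      have h := ((hasDerivAt_id x).const_mul 2).sub_const (a + b)
      have h2 : HasDerivAt (fun x : ℝ => 2*x - a - b) 2 x := by
        simpa [sub_sub] using h
      simpa [div_eq_mul_inv] using h2.div_const (b - a)
    have hqd : HasDerivAt (fun x : ℝ => (b - x)*(x - a)) (a + b - 2*x) x := by
      have h := (((hasDerivAt_id x).const_sub b).mul ((hasDerivAt_id x).sub_const a))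
      exact h.congr_deriv (by simp only [id]; ring)
    have hsq := hqd.sqrt hq.ne'
    have harc := ((Real.hasDerivAt_arcsin hu1 hu2).comp x hlin).const_mul ((a+b)/2)
    have := (hsq.neg).add harc
    refine this.congr_deriv ?_
    symm
    rw [sqrt_aux hab hx]
    have hs : (0:ℝ) < Real.sqrt ((b - x)*(x - a)) := Real.sqrt_pos.2 hq
    field_simp
    ring
  have hpos : ∀ x ∈ Ioo a b, 0 ≤ x / Real.sqrt ((b - x)*(x - a)) := by
    intro x hx
    have : 0 ≤ x := by linarith [hx.1]
    positivity
  obtain ⟨hi, hv⟩ := ftc_aux hab.le hc hd hpos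
  refine ⟨hi, ?_⟩
  rw [hv, hf]
  have e1 : (2*b - a - b)/(b - a) = 1 := by field_simp; ring
  have e2 : (2*a - a - b)/(b - a) = -1 := by field_simp; ring
  simp only [e1, e2, Real.arcsin_one, Real.arcsin_neg_one, sub_self, mul_zero,
    Real.sqrt_zero, neg_zero, zero_add]
  ring_nf
  simp

lemma int_inv {A B : ℝ} (hA : 0 < A) (hAB : A < B) :
    IntervalIntegrable (fun t => 1 / (t * Real.sqrt ((B - t)*(t - A)))) volume A B ∧
    ∫ t in A..B, 1 / (t * Real.sqrt ((B - t)*(t - A))) = Real.pi / Real.sqrt (A*B) := by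
  have hBA : (0:ℝ) < B - A := by linarith
  have hB : (0:ℝ) < B := by linarith
  have hABpos : (0:ℝ) < A*B := by positivity
  set s := Real.sqrt (A*B) with hsdef
  have hs2 : s * s = A*B := Real.mul_self_sqrt hABpos.le
  have hspos : (0:ℝ) < s := Real.sqrt_pos.2 hABpos
  set h : ℝ → ℝ := fun t => ((A+B)*t - 2*A*B)/((B-A)*t) with hh
  set f : ℝ → ℝ := fun t => (1/s) * Real.arcsin (h t) with hf
  have hc : ContinuousOn f (Icc A B) := by
    apply ContinuousOn.mul continuousOn_const
    apply Real.continuous_arcsin.comp_continuousOn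
    apply ContinuousOn.div (by fun_prop) (by fun_prop)
    intro x hx
    have hx0 : 0 < x := lt_of_lt_of_le hA hx.1
    positivity
  have hd : ∀ t ∈ Ioo A B, HasDerivAt f (1 / (t * Real.sqrt ((B - t)*(t - A)))) t := by
    intro t ht
    have ht0 : 0 < t := lt_trans hA ht.1
    have hq : (0:ℝ) < (B - t)*(t - A) := by
      have := ht.1; have := ht.2; nlinarith
    have hqs : (0:ℝ) < Real.sqrt ((B - t)*(t - A)) := Real.sqrt_pos.2 hq
    have hden : (B - A)*t ≠ 0 := by positivity
    have hu1 : h t ≠ -1 := by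
      rw [hh]; intro hcon
      rw [div_eq_iff hden] at hcon
      have := ht.1; nlinarith
    have hu2 : h t ≠ 1 := by
      rw [hh]; intro hcon
      rw [div_eq_iff hden] at hcon
      have := ht.2; nlinarith
    have hnum : HasDerivAt (fun t : ℝ => (A+B)*t - 2*A*B) (A+B) t := by
      simpa using ((hasDerivAt_id t).const_mul (A+B)).sub_const (2*A*B)
    have hdeno : HasDerivAt (fun t : ℝ => (B-A)*t) (B-A) t := by
      simpa using (hasDerivAt_id t).const_mul (B-A)
    have hlin : HasDerivAt h (((A+B)*((B-A)*t) - ((A+B)*t - 2*A*B)*(B-A))/((B-A)*t)^2) t :=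
      hnum.div hdeno hden
    have hsq1 : 1 - (h t)^2 = (2*s/((B-A)*t))^2 * ((B - t)*(t - A)) := by
      rw [hh]
      field_simp
      linear_combination (-4*(B-t)*(t-A)) * hs2
    have hsqrt : Real.sqrt (1 - (h t)^2)
        = (2*s/((B-A)*t)) * Real.sqrt ((B - t)*(t - A)) := by
      rw [hsq1, Real.sqrt_mul (sq_nonneg _), Real.sqrt_sq (by positivity)]
    have := ((Real.hasDerivAt_arcsin hu1 hu2).comp t hlin).const_mul (1/s)
    refine this.congr_deriv ?_
    symm
    rw [hsqrt]
    field_simp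
    linear_combination 2 * hs2
  have hpos : ∀ t ∈ Ioo A B, 0 ≤ 1 / (t * Real.sqrt ((B - t)*(t - A))) := by
    intro t ht
    have ht0 : 0 < t := lt_trans hA ht.1
    positivity
  obtain ⟨hi, hv⟩ := ftc_aux hAB.le hc hd hpos
  refine ⟨hi, ?_⟩
  rw [hv, hf, hh]
  have e1 : ((A+B)*B - 2*A*B)/((B-A)*B) = 1 := by
    rw [div_eq_one_iff_eq (by positivity)]; ring
  have e2 : ((A+B)*A - 2*A*B)/((B-A)*A) = -1 := by
    rw [div_eq_iff (by positivity)]; ring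
  simp only [e1, e2, Real.arcsin_one, Real.arcsin_neg_one]
  field_simp
  ring

theorem stmt_4 (α β γ a b : ℝ) (hγ : 0 < γ) (hα : 1 < α) (ha : 0 < a) (hab : a < b) :
    ((1 / Real.pi) * ∫ x in a..b,
        (γ + β / (1 + x) - (α - 1) / x) / Real.sqrt ((b - x) * (x - a)) = 0 ∧
     (1 / Real.pi) * ∫ x in a..b,
        x * (γ + β / (1 + x) - (α - 1) / x) / Real.sqrt ((b - x) * (x - a)) = 2)
    ↔
    (γ + β / Real.sqrt ((a + 1) * (b + 1)) - (α - 1) / Real.sqrt (a * b) = 0 ∧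
     γ * (a + b) / 2 - α + 1 + β - β / Real.sqrt ((a + 1) * (b + 1)) = 2) := by
  have hπ : Real.pi ≠ 0 := Real.pi_ne_zero
  set q : ℝ → ℝ := fun x => Real.sqrt ((b - x) * (x - a)) with hq
  -- basic integrals
  obtain ⟨i1, v1⟩ := int_one hab
  obtain ⟨i2, v2⟩ := int_x ha hab
  obtain ⟨i3, v3⟩ := int_inv ha hab
  -- shifted integral
  have hA1 : (0:ℝ) < a + 1 := by linarith
  have hAB1 : a + 1 < b + 1 := by linarith
  obtain ⟨i4', v4'⟩ := int_inv hA1 hAB1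
  have hgeq : (fun x : ℝ => 1 / ((x+1) * Real.sqrt ((b+1-(x+1))*((x+1)-(a+1)))))
      = (fun x : ℝ => 1 / ((1+x) * q x)) := by
    funext x
    rw [show b+1-(x+1) = b - x by ring, show (x+1)-(a+1) = x - a by ring,
      show x + 1 = 1 + x by ring]
  have i4 : IntervalIntegrable (fun x => 1 / ((1+x) * q x)) volume a b := by
    have := i4'.comp_add_right 1
    rw [show a + 1 - 1 = a by ring, show b + 1 - 1 = b by ring] at this
    rwa [hgeq] at this
  have v4 : ∫ x in a..b, 1 / ((1+x) * q x)
      = Real.pi / Real.sqrt ((a+1)*(b+1)) := by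
    rw [← hgeq]
    rw [intervalIntegral.integral_comp_add_right
      (fun t => 1 / (t * Real.sqrt ((b+1-t)*(t-(a+1))))) 1]
    exact v4'
  -- first integral value
  have split1 : (fun x : ℝ => (γ + β / (1 + x) - (α - 1) / x) / q x)
      = fun x => γ * (1 / q x) + β * (1 / ((1+x) * q x)) - (α - 1) * (1 / (x * q x)) := by
    funext x
    rw [sub_div, add_div, div_div, div_div, div_eq_mul_one_div γ,
      div_eq_mul_one_div β, div_eq_mul_one_div (α-1)]
  have V1 : ∫ x in a..b, (γ + β / (1 + x) - (α - 1) / x) / q x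
      = γ * Real.pi + β * (Real.pi / Real.sqrt ((a+1)*(b+1)))
        - (α - 1) * (Real.pi / Real.sqrt (a*b)) := by
    rw [split1, intervalIntegral.integral_sub ((i1.const_mul γ).add (i4.const_mul β))
        (i3.const_mul (α-1)),
      intervalIntegral.integral_add (i1.const_mul γ) (i4.const_mul β),
      intervalIntegral.integral_const_mul, intervalIntegral.integral_const_mul,
      intervalIntegral.integral_const_mul, v1, v3, v4]
  -- second integral value
  have split2 : EqOn (fun x : ℝ => x * (γ + β / (1 + x) - (α - 1) / x) / q x)
      (fun x => γ * (x / q x) + (β - α + 1) * (1 / q x) - β * (1 / ((1+x) * q x)))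
      (Set.uIcc a b) := by
    intro x hx
    rw [Set.uIcc_of_le hab.le] at hx
    have hx0 : x ≠ 0 := by have := hx.1; intro h; subst h; linarith
    have hx1 : (1:ℝ) + x ≠ 0 := by have := hx.1; intro h; linarith
    simp only
    rcases eq_or_ne (q x) 0 with hq0 | hq0
    · rw [hq0]; simp
    · field_simp
      ring
  have V2 : ∫ x in a..b, x * (γ + β / (1 + x) - (α - 1) / x) / q x
      = γ * (Real.pi * (a + b) / 2) + (β - α + 1) * Real.pi
        - β * (Real.pi / Real.sqrt ((a+1)*(b+1))) := by
    rw [intervalIntegral.integral_congr split2,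
      intervalIntegral.integral_sub ((i2.const_mul γ).add (i1.const_mul (β - α + 1)))
        (i4.const_mul β),
      intervalIntegral.integral_add (i2.const_mul γ) (i1.const_mul (β - α + 1)),
      intervalIntegral.integral_const_mul, intervalIntegral.integral_const_mul,
      intervalIntegral.integral_const_mul, v2, v1, v4]
  rw [V1, V2]
  set s1 := Real.sqrt ((a+1)*(b+1)) with hs1def
  set s0 := Real.sqrt (a*b) with hs0def
  have hs1 : s1 ≠ 0 := by rw [hs1def]; exact (Real.sqrt_pos.2 (by nlinarith)).ne'
  have hs0 : s0 ≠ 0 := by rw [hs0def]; exact (Real.sqrt_pos.2 (by nlinarith)).ne'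
  have key1 : 1/Real.pi * (γ * Real.pi + β * (Real.pi/s1) - (α-1) * (Real.pi/s0))
      = γ + β/s1 - (α-1)/s0 := by
    field_simp
  have key2 : 1/Real.pi * (γ * (Real.pi*(a+b)/2) + (β - α + 1) * Real.pi - β * (Real.pi/s1))
      = γ * (a+b)/2 - α + 1 + β - β/s1 := by
    field_simp
    ring
  rw [key1, key2]
end

section
/- The function μ_V(x) = (1/(2π))·√((x-a)(b-x))·((α-1)/(x√(ab)) - β/((1+x)√((a+1)(b+1)))) on (a,b) integrates to 1, provided 0 < a < b, γ > 0, α > 1, β ∈ ℝ satisfy the system γ + β/√((a+1)(b+1)) - (α-1)/√(ab) = 0 and γ(a+b)/2 - α + 1 + β - β/√((a+1)(b+1)) = 2. -/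
set_option maxHeartbeats 1000000

open Real Set

lemma key_semicircle (a b c : ℝ) (hac : 0 < a + c) (hab : a < b) :
    ∫ x in a..b, Real.sqrt ((x - a) * (b - x)) / (x + c)
      = Real.pi * ((a + b) / 2 + c - Real.sqrt ((a + c) * (b + c))) := by
  set m : ℝ := (a + b) / 2 with hm
  set r : ℝ := (b - a) / 2 with hr
  set d : ℝ := m + c with hd
  have hr0 : 0 < r := by simp [hr]; linarith
  have hdr : r < d := by simp [hd, hm, hr]; linarith
  have hbc : 0 < b + c := by linarith
  have hd2r2 : d ^ 2 - r ^ 2 = (a + c) * (b + c) := by simp [hd, hm, hr]; ring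
  set D : ℝ := Real.sqrt ((a + c) * (b + c)) with hD
  have hD2 : D ^ 2 = (a + c) * (b + c) := Real.sq_sqrt (by positivity)
  set F : ℝ → ℝ := fun x =>
    Real.sqrt ((x - a) * (b - x)) + d * Real.arcsin ((x - m) / r)
      - D * Real.arcsin ((d * (x - m) + r ^ 2) / (r * (x + c))) with hF
  have hcont : ContinuousOn F (Icc a b) := by
    apply ContinuousOn.sub
    apply ContinuousOn.add
    · exact (Real.continuous_sqrt.comp (by continuity)).continuousOn
    · exact (continuous_const.mul (Real.continuous_arcsin.comp (by continuity))).continuousOn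
    · apply ContinuousOn.mul continuousOn_const
      apply Real.continuous_arcsin.comp_continuousOn
      apply ContinuousOn.div (by fun_prop) (by fun_prop)
      intro x hx
      have : 0 < x + c := by have := hx.1; linarith
      positivity
  have hderiv : ∀ x ∈ Ioo a b,
      HasDerivAt F (Real.sqrt ((x - a) * (b - x)) / (x + c)) x := by
    intro x hx
    obtain ⟨hxa, hxb⟩ := hx
    have hxc : 0 < x + c := by linarith
    have hP : 0 < (x - a) * (b - x) := by nlinarith
    have hsP : 0 < Real.sqrt ((x - a) * (b - x)) := Real.sqrt_pos.2 hP
    set P := (x - a) * (b - x) with hPdef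
    -- derivative of sqrt part
    have d1 : HasDerivAt (fun y => Real.sqrt ((y - a) * (b - y)))
        ((b - x - (x - a)) / (2 * Real.sqrt P)) x := by
      have inner : HasDerivAt (fun y => (y - a) * (b - y)) (b - x - (x - a)) x := by
        have := (((hasDerivAt_id x).sub_const a).mul
          ((hasDerivAt_const x b).sub (hasDerivAt_id x)))
        have h2 : (1:ℝ) * (b - id x) + (id x - a) * (0 - 1) = b - x - (x - a) := by
          simp; ring
        rw [← h2]; exact this
      have := (Real.hasDerivAt_sqrt hP.ne').comp x inner
      refine this.congr_deriv ?_; symm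
      field_simp
    -- derivative of first arcsin part
    have hy1 : (x - m) / r ≠ 1 := by
      have : (x - m) / r < 1 := (div_lt_one hr0).2 (by simp [hm, hr]; linarith)
      exact this.ne
    have hy2 : (x - m) / r ≠ -1 := by
      have : (-1 : ℝ) < (x - m) / r := (lt_div_iff₀ hr0).2 (by simp [hm, hr]; linarith)
      exact this.ne'
    have d2 : HasDerivAt (fun y => Real.arcsin ((y - m) / r))
        (1 / Real.sqrt (1 - ((x - m) / r) ^ 2) * (1 / r)) x := by
      have inner : HasDerivAt (fun y => (y - m) / r) (1 / r) x := by
        simpa [one_div] using ((hasDerivAt_id x).sub_const m).div_const r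
      exact (Real.hasDerivAt_arcsin hy2 hy1).comp x inner
    -- second arcsin argument
    have hident : (r * (x + c)) ^ 2 - (d * (x - m) + r ^ 2) ^ 2
        = (d ^ 2 - r ^ 2) * (r ^ 2 - (x - m) ^ 2) := by
      have hxcd : x + c = (x - m) + d := by simp [hd]; ring
      rw [hxcd]; ring
    have hru : 0 < r ^ 2 - (x - m) ^ 2 := by
      have h1 : -r < x - m := by simp [hr, hm]; linarith
      have h2 : x - m < r := by simp [hr, hm]; linarith
      nlinarith
    have hd2r2' : 0 < d ^ 2 - r ^ 2 := by rw [hd2r2]; positivity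
    have hPu : P = r ^ 2 - (x - m) ^ 2 := by simp [hPdef, hm, hr]; ring
    have hsq : ((d * (x - m) + r ^ 2) / (r * (x + c))) ^ 2 < 1 := by
      rw [div_pow, div_lt_one (by positivity)]
      nlinarith
    have habs : |(d * (x - m) + r ^ 2) / (r * (x + c))| < 1 := by
      nlinarith [sq_abs ((d * (x - m) + r ^ 2) / (r * (x + c))),
        abs_nonneg ((d * (x - m) + r ^ 2) / (r * (x + c)))]
    have habs' := abs_lt.1 habs
    have hh1 : (d * (x - m) + r ^ 2) / (r * (x + c)) ≠ 1 := habs'.2.ne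
    have hh2 : (d * (x - m) + r ^ 2) / (r * (x + c)) ≠ -1 := habs'.1.ne'
    have d3 : HasDerivAt (fun y => Real.arcsin ((d * (y - m) + r ^ 2) / (r * (y + c))))
        (1 / Real.sqrt (1 - ((d * (x - m) + r ^ 2) / (r * (x + c))) ^ 2) *
          ((d * (r * (x + c)) - (d * (x - m) + r ^ 2) * r) / (r * (x + c)) ^ 2)) x := by
      have inner : HasDerivAt (fun y => (d * (y - m) + r ^ 2) / (r * (y + c)))
          ((d * (r * (x + c)) - (d * (x - m) + r ^ 2) * r) / (r * (x + c)) ^ 2) x := by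
        have hnum : HasDerivAt (fun y => d * (y - m) + r ^ 2) d x := by
          have := (((hasDerivAt_id x).sub_const m).const_mul d).add_const (r ^ 2)
          simpa using this
        have hden : HasDerivAt (fun y => r * (y + c)) r x := by
          have := ((hasDerivAt_id x).add_const c).const_mul r
          simpa using this
        exact hnum.div hden (by positivity)
      exact (Real.hasDerivAt_arcsin hh2 hh1).comp x inner
    have total := (d1.add (d2.const_mul d)).sub (d3.const_mul D)
    refine total.congr_deriv ?_; symm
    -- now simplify
    have e1 : Real.sqrt (1 - ((x - m) / r) ^ 2) = Real.sqrt P / r := by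
      rw [show (1 : ℝ) - ((x - m) / r) ^ 2 = P / r ^ 2 by
        field_simp; simp [hPdef, hm, hr]; ring]
      rw [Real.sqrt_div hP.le, Real.sqrt_sq hr0.le]
    have e2 : Real.sqrt (1 - ((d * (x - m) + r ^ 2) / (r * (x + c))) ^ 2)
        = D * Real.sqrt P / (r * (x + c)) := by
      have key : (1 : ℝ) - ((d * (x - m) + r ^ 2) / (r * (x + c))) ^ 2
          = ((a + c) * (b + c)) * P / (r * (x + c)) ^ 2 := by
        have h0 : (0:ℝ) < (r * (x + c)) ^ 2 := by positivity
        rw [div_pow, ← hd2r2, hPu, eq_div_iff h0.ne', sub_mul, one_mul,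
          div_mul_cancel₀ _ h0.ne']
        linarith [hident]
      rw [key, Real.sqrt_div (by positivity), Real.sqrt_mul (mul_pos hac hbc).le,
        Real.sqrt_sq (by positivity), ← hD]
    rw [e1, e2]
    have hPsq : Real.sqrt P ^ 2 = P := Real.sq_sqrt hP.le
    have hDne : 0 < D := Real.sqrt_pos.2 (mul_pos hac hbc)
    have step2 : d * (1 / (Real.sqrt P / r) * (1 / r)) = d / Real.sqrt P := by
      rw [one_div_div]; field_simp
    have hN : d * (r * (x + c)) - (d * (x - m) + r ^ 2) * r = r * (d ^ 2 - r ^ 2) := by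
      have hxcd : x + c = (x - m) + d := by simp [hd]; ring
      rw [hxcd]; ring
    have step3 : D * (1 / (D * Real.sqrt P / (r * (x + c))) *
        ((d * (r * (x + c)) - (d * (x - m) + r ^ 2) * r) / (r * (x + c)) ^ 2))
        = (d ^ 2 - r ^ 2) / (Real.sqrt P * (x + c)) := by
      rw [hN, one_div_div]
      field_simp
    rw [step2, step3]
    have expand : (b - x - (x - a)) / (2 * Real.sqrt P) + d / Real.sqrt P
        - (d ^ 2 - r ^ 2) / (Real.sqrt P * (x + c))
        = ((b - x - (x - a)) * (x + c) + 2 * d * (x + c) - 2 * (d ^ 2 - r ^ 2))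
          / (2 * Real.sqrt P * (x + c)) := by
      field_simp
    rw [expand, div_eq_div_iff (by positivity) (by positivity)]
    have hs : Real.sqrt ((x - a) * (b - x)) * Real.sqrt ((x - a) * (b - x))
        = (x - a) * (b - x) := Real.mul_self_sqrt hP.le
    rw [hPdef, hd, hm, hr]
    linear_combination (2 * (x + c)) * hs
  have hint : IntervalIntegrable (fun x => Real.sqrt ((x - a) * (b - x)) / (x + c))
      MeasureTheory.volume a b := by
    apply ContinuousOn.intervalIntegrable
    apply ContinuousOn.div
    · exact (Real.continuous_sqrt.comp (by continuity)).continuousOn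
    · fun_prop
    · intro x hx
      rw [uIcc_of_le hab.le] at hx
      have := hx.1
      exact ne_of_gt (by linarith)
  rw [intervalIntegral.integral_eq_sub_of_hasDerivAt_of_le hab.le hcont hderiv hint]
  -- evaluate F b - F a
  have hFb : F b = d * (Real.pi / 2) - D * (Real.pi / 2) := by
    rw [hF]
    have e1 : (b - a) * (b - b) = 0 := by ring
    have e2 : (b - m) / r = 1 := by
      rw [div_eq_one_iff_eq hr0.ne']; simp [hm, hr]; ring
    have e3 : (d * (b - m) + r ^ 2) / (r * (b + c)) = 1 := by
      rw [div_eq_one_iff_eq (by positivity)]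
      have : b - m = r := by simp [hm, hr]; ring
      rw [this]
      have : b + c = d + r := by simp [hd, hm, hr]; ring
      rw [this]; ring
    simp [e1, e2, e3, Real.arcsin_one]
  have hFa : F a = -(d * (Real.pi / 2)) + D * (Real.pi / 2) := by
    rw [hF]
    have e1 : (a - a) * (b - a) = 0 := by ring
    have e2 : (a - m) / r = -1 := by
      rw [div_eq_iff hr0.ne']; simp [hm, hr]; ring
    have e3 : (d * (a - m) + r ^ 2) / (r * (a + c)) = -1 := by
      rw [div_eq_iff (by positivity)]
      have h1 : a - m = -r := by simp [hm, hr]; ring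
      have h2 : a + c = d - r := by simp [hd, hm, hr]; ring
      rw [h1, h2]; ring
    simp [e1, e2, e3, Real.arcsin_one, Real.arcsin_neg_one]
    try ring
  rw [hFb, hFa, hD, hd, hm]
  ring

theorem stmt_7 (α β γ a b : ℝ) (ha : 0 < a) (hab : a < b) (hγ : 0 < γ) (hα : 1 < α)
    (h1 : γ + β / Real.sqrt ((a + 1) * (b + 1)) - (α - 1) / Real.sqrt (a * b) = 0)
    (h2 : γ * (a + b) / 2 - α + 1 + β - β / Real.sqrt ((a + 1) * (b + 1)) = 2) :
    ∫ x in a..b,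
      (1 / (2 * Real.pi)) * Real.sqrt ((x - a) * (b - x)) *
        ((α - 1) / (x * Real.sqrt (a * b)) -
         β / ((1 + x) * Real.sqrt ((a + 1) * (b + 1)))) = 1 := by
  have hb : 0 < b := lt_trans ha hab
  set t : ℝ := Real.sqrt (a * b) with ht
  set s : ℝ := Real.sqrt ((a + 1) * (b + 1)) with hs
  have ht0 : 0 < t := Real.sqrt_pos.2 (by positivity)
  have hs0 : 0 < s := Real.sqrt_pos.2 (by positivity)
  have hπ : (0:ℝ) < Real.pi := Real.pi_pos
  -- rewrite the integrand
  have hEq : Set.EqOn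
      (fun x => (1 / (2 * Real.pi)) * Real.sqrt ((x - a) * (b - x)) *
        ((α - 1) / (x * t) - β / ((1 + x) * s)))
      (fun x => ((α - 1) / t / (2 * Real.pi)) * (Real.sqrt ((x - a) * (b - x)) / x)
        - (β / s / (2 * Real.pi)) * (Real.sqrt ((x - a) * (b - x)) / (x + 1)))
      (Set.uIcc a b) := by
    intro x hx
    rw [Set.uIcc_of_le hab.le] at hx
    have hx0 : 0 < x := lt_of_lt_of_le ha hx.1
    have hx1 : 0 < 1 + x := by linarith
    field_simp
    ring
  rw [intervalIntegral.integral_congr hEq]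
  have int0 : IntervalIntegrable (fun x => Real.sqrt ((x - a) * (b - x)) / x)
      MeasureTheory.volume a b := by
    apply ContinuousOn.intervalIntegrable
    apply ContinuousOn.div
    · exact (Real.continuous_sqrt.comp (by continuity)).continuousOn
    · fun_prop
    · intro x hx
      rw [Set.uIcc_of_le hab.le] at hx
      exact ne_of_gt (lt_of_lt_of_le ha hx.1)
  have int1 : IntervalIntegrable (fun x => Real.sqrt ((x - a) * (b - x)) / (x + 1))
      MeasureTheory.volume a b := by
    apply ContinuousOn.intervalIntegrable
    apply ContinuousOn.div
    · exact (Real.continuous_sqrt.comp (by continuity)).continuousOn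
    · fun_prop
    · intro x hx
      rw [Set.uIcc_of_le hab.le] at hx
      have := hx.1
      exact ne_of_gt (by linarith)
  rw [intervalIntegral.integral_sub (int0.const_mul _) (int1.const_mul _),
    intervalIntegral.integral_const_mul, intervalIntegral.integral_const_mul]
  have I0 : ∫ x in a..b, Real.sqrt ((x - a) * (b - x)) / x
      = Real.pi * ((a + b) / 2 - t) := by
    have := key_semicircle a b 0 (by linarith) hab
    simpa [ht] using this
  have I1 : ∫ x in a..b, Real.sqrt ((x - a) * (b - x)) / (x + 1)
      = Real.pi * ((a + b) / 2 + 1 - s) := by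
    have := key_semicircle a b 1 (by linarith) hab
    simpa [hs] using this
  rw [I0, I1]
  -- algebra
  set u : ℝ := β / s with hu
  set v : ℝ := (α - 1) / t with hv
  have hus : u * s = β := div_mul_cancel₀ _ hs0.ne'
  have hvt : v * t = α - 1 := div_mul_cancel₀ _ ht0.ne'
  have hvγu : v = γ + u := by linarith
  have key2 : v * ((a + b) / 2 - t) - u * ((a + b) / 2 + 1 - s) = 2 := by
    have hvt' : (γ + u) * t = α - 1 := by rw [← hvγu]; exact hvt
    rw [hvγu]
    linear_combination h2 + hus - hvt'
  rw [show v / (2 * Real.pi) * (Real.pi * ((a + b) / 2 - t))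
      - u / (2 * Real.pi) * (Real.pi * ((a + b) / 2 + 1 - s))
      = (v * ((a + b) / 2 - t) - u * ((a + b) / 2 + 1 - s)) / 2 by
    field_simp]
  rw [key2]
  norm_num
end

section
/- Let g(x) = ∫_a^b log|x-t|⁻¹ dμ(t) + V(x)/2 + (1/2)∫_a^b V dμ, where μ is the free-Kummer equilibrium measure with parameters α, β, γ (γ > 0) on [a,b]. Then for x > b, g'(x) = (1/2)√((x-a)(x-b))·((α-1)/(x√(ab)) - β/((1+x)√((a+1)(b+1)))) and this expression is strictly positive; hence g is strictly increasing on (b, ∞). -/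
open Real Set


lemma base0 (r k : ℝ) (hr : 0 < r) (hk : k < -r) :
    ∫ s in (-r)..r, Real.sqrt (r^2 - s^2) / (s - k)
      = Real.pi * (-k - Real.sqrt (k^2 - r^2)) := by
  have hkr : k^2 - r^2 > 0 := by nlinarith
  set F : ℝ → ℝ := fun s => Real.sqrt (r^2 - s^2) - k * Real.arcsin (s/r)
      - Real.sqrt (k^2 - r^2) * Real.arcsin ((r^2 - k*s)/(r*(s-k))) with hF
  have hsk : ∀ s ∈ Icc (-r) r, s - k > 0 := fun s hs => by
    have := hs.1; linarith
  have hcont : ContinuousOn F (Icc (-r) r) := by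
    apply ContinuousOn.sub
    apply ContinuousOn.sub
    · exact (Real.continuous_sqrt.comp (by continuity)).continuousOn
    · exact (continuous_const.mul (Real.continuous_arcsin.comp (by continuity))).continuousOn
    · apply ContinuousOn.mul continuousOn_const
      apply Real.continuous_arcsin.comp_continuousOn
      apply ContinuousOn.div (by fun_prop) (by fun_prop)
      intro s hs
      have := hsk s hs
      positivity
  have hderiv : ∀ s ∈ Ioo (-r) r,
      HasDerivWithinAt F (Real.sqrt (r^2 - s^2) / (s - k)) (Ioi s) s := by
    intro s hs
    have hs1 : r^2 - s^2 > 0 := by nlinarith [hs.1, hs.2]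
    have hsk' : s - k > 0 := by have := hs.1; linarith
    have hskne : s - k ≠ 0 := ne_of_gt hsk'
    have hw : Real.sqrt (r^2 - s^2) > 0 := Real.sqrt_pos.mpr hs1
    have hwk : Real.sqrt (k^2 - r^2) > 0 := Real.sqrt_pos.mpr hkr
    set w := Real.sqrt (r^2 - s^2) with hwdef
    set q := Real.sqrt (k^2 - r^2) with hqdef
    have hw2 : w ^ 2 = r^2 - s^2 := Real.sq_sqrt hs1.le
    have hwk2 : q ^ 2 = k^2 - r^2 := Real.sq_sqrt hkr.le
    -- derivative of sqrt part
    have d1 : HasDerivAt (fun s => Real.sqrt (r^2 - s^2)) (-2*s / (2 * w)) s := by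
      have : HasDerivAt (fun s : ℝ => r^2 - s^2) (-2*s) s := by
        simpa using ((hasDerivAt_pow 2 s).const_sub (r^2))
      exact this.sqrt (by positivity)
    -- derivative of arcsin(s/r)
    have hsr : s / r ∈ Ioo (-1 : ℝ) 1 := by
      constructor
      · rw [lt_div_iff₀ hr]; nlinarith [hs.1]
      · rw [div_lt_one hr]; exact hs.2
    have d2 : HasDerivAt (fun s => Real.arcsin (s/r)) ((1 / Real.sqrt (1 - (s/r)^2)) * (1/r)) s := by
      have h := Real.hasDerivAt_arcsin (ne_of_gt hsr.1) (ne_of_lt hsr.2)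
      exact h.comp s ((hasDerivAt_id s).div_const r)
    -- derivative of arcsin(h(s))
    set h : ℝ → ℝ := fun s => (r^2 - k*s)/(r*(s-k)) with hh
    have hden : r*(s-k) ≠ 0 := by positivity
    have dh : HasDerivAt h ((k^2 - r^2)/(r*(s-k)^2)) s := by
      have d3 : HasDerivAt (fun s : ℝ => r^2 - k*s) (-k) s := by
        simpa using ((hasDerivAt_id s).const_mul k).const_sub (r^2)
      have d4 : HasDerivAt (fun s : ℝ => r*(s-k)) r s := by
        simpa using (((hasDerivAt_id s).sub_const k).const_mul r)
      have := d3.div d4 hden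
      have e : (k^2 - r^2)/(r*(s-k)^2)
          = (-k * (r * (s - k)) - (r ^ 2 - k * s) * r) / (r * (s - k)) ^ 2 := by
        rw [div_eq_div_iff (by positivity) (by positivity)]
        ring
      rw [e]
      exact this
    have h2lt : 1 - (h s)^2 = (k^2 - r^2)*(r^2 - s^2)/(r*(s-k))^2 := by
      rw [hh]
      simp only
      rw [div_pow, eq_div_iff (by positivity), sub_mul, one_mul,
        div_mul_cancel₀ _ (pow_ne_zero 2 hden)]
      ring
    have h2pos : 1 - (h s)^2 > 0 := by rw [h2lt]; positivity
    have darcsinh : HasDerivAt (fun s => Real.arcsin (h s))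
        ((1 / Real.sqrt (1 - (h s)^2)) * ((k^2 - r^2)/(r*(s-k)^2))) s := by
      have hne1 : h s ≠ -1 := by nlinarith [h2pos]
      have hne2 : h s ≠ 1 := by nlinarith [h2pos]
      exact (Real.hasDerivAt_arcsin hne1 hne2).comp s dh
    have D : HasDerivAt F
        (-2*s / (2 * w) - k * ((1 / Real.sqrt (1 - (s/r)^2)) * (1/r))
          - q * ((1 / Real.sqrt (1 - (h s)^2)) * ((k^2 - r^2)/(r*(s-k)^2)))) s := by
      exact (d1.sub (d2.const_mul k)).sub (darcsinh.const_mul _)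
    have e1 : Real.sqrt (1 - (s/r)^2) = w / r := by
      have : 1 - (s/r)^2 = (r^2 - s^2) / r^2 := by
        field_simp
      rw [this, Real.sqrt_div hs1.le, Real.sqrt_sq hr.le]
    have e2 : Real.sqrt (1 - (h s)^2) = q * w / (r*(s-k)) := by
      rw [h2lt, Real.sqrt_div (by positivity), Real.sqrt_sq (by positivity),
        Real.sqrt_mul hkr.le]
    have heq : -2*s / (2 * w) - k * ((1 / Real.sqrt (1 - (s/r)^2)) * (1/r))
          - q * ((1 / Real.sqrt (1 - (h s)^2)) * ((k^2 - r^2)/(r*(s-k)^2)))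
        = w / (s - k) := by
      rw [e1, e2]
      have key : (-s - k) * (s - k) - (k^2 - r^2) = w ^ 2 := by rw [hw2]; ring
      calc -2*s / (2 * w) - k * ((1 / (w/r)) * (1/r))
            - q * ((1 / (q*w/(r*(s-k)))) * ((k^2 - r^2)/(r*(s-k)^2)))
          = ((-s - k) * (s - k) - (k^2 - r^2)) / (w * (s-k)) := by
            field_simp
        _ = w ^ 2 / (w * (s-k)) := by rw [key]
        _ = w / (s - k) := by
            rw [pow_two, mul_div_mul_left _ _ (ne_of_gt hw)]
    rw [heq] at D
    exact D.hasDerivWithinAt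
  have hint : IntervalIntegrable (fun s => Real.sqrt (r^2 - s^2) / (s - k))
      MeasureTheory.volume (-r) r := by
    apply ContinuousOn.intervalIntegrable
    rw [uIcc_of_le (by linarith)]
    apply ContinuousOn.div (by fun_prop) (by fun_prop)
    intro s hs
    exact ne_of_gt (hsk s hs)
  have hFTC := intervalIntegral.integral_eq_sub_of_hasDeriv_right_of_le (by linarith)
    hcont hderiv hint
  rw [hFTC]
  have hFr : F r = - k * (Real.pi/2) - Real.sqrt (k^2-r^2) * (Real.pi/2) := by
    rw [hF]
    simp only
    have e0 : (r:ℝ)^2 - r^2 = 0 := by ring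
    rw [e0, Real.sqrt_zero, div_self (ne_of_gt hr)]
    have : (r^2 - k*r)/(r*(r-k)) = 1 := by
      rw [div_eq_one_iff_eq (by nlinarith)]
      ring
    rw [this, Real.arcsin_one]
    ring
  have hFnr : F (-r) = k * (Real.pi/2) + Real.sqrt (k^2-r^2) * (Real.pi/2) := by
    rw [hF]
    simp only
    have e0 : (r:ℝ)^2 - (-r)^2 = 0 := by ring
    rw [e0, Real.sqrt_zero]
    have e1 : (-r) / r = -1 := by field_simp
    rw [e1]
    have e2 : (r^2 - k*(-r))/(r*((-r)-k)) = -1 := by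
      rw [div_eq_iff (by nlinarith)]
      ring
    rw [e2, Real.arcsin_neg_one]
    ring
  rw [hFr, hFnr]
  ring

lemma baseJ (a b c : ℝ) (hca : c < a) (hab : a < b) :
    ∫ t in a..b, Real.sqrt ((t-a)*(b-t)) / (t-c)
      = Real.pi * ((a+b)/2 - c - Real.sqrt ((a-c)*(b-c))) := by
  set r := (b-a)/2 with hrdef
  set m := (a+b)/2 with hmdef
  set k := c - m with hkdef
  have hr : 0 < r := by rw [hrdef]; linarith
  have hk : k < -r := by rw [hkdef, hrdef]; linarith
  have key := base0 r k hr hk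
  have e1 : ∫ s in (-r)..r, Real.sqrt (r^2 - s^2) / (s - k)
      = ∫ s in (-r)..r, (fun t => Real.sqrt ((t-a)*(b-t)) / (t-c)) (s + m) := by
    apply intervalIntegral.integral_congr
    intro s _
    simp only
    have e2 : (s + m - a) * (b - (s + m)) = r^2 - s^2 := by
      rw [hmdef, hrdef]; ring
    have e3 : s + m - c = s - k := by rw [hkdef]; ring
    rw [e2, e3]
  have e7 := intervalIntegral.integral_comp_add_right (a := -r) (b := r)
    (fun t => Real.sqrt ((t-a)*(b-t)) / (t-c)) m
  rw [e1, e7] at key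
  have e4 : -r + m = a := by rw [hrdef, hmdef]; ring
  have e5 : r + m = b := by rw [hrdef, hmdef]; ring
  rw [e4, e5] at key
  rw [key]
  have e6 : k^2 - r^2 = (a-c)*(b-c) := by rw [hkdef, hrdef, hmdef]; ring
  rw [e6]
  rw [hkdef, hmdef]
  ring

lemma baseJx (a b x : ℝ) (hab : a < b) (hbx : b < x) :
    ∫ t in a..b, Real.sqrt ((t-a)*(b-t)) / (x-t)
      = Real.pi * (x - (a+b)/2 - Real.sqrt ((x-a)*(x-b))) := by
  have key := baseJ a b (a + b - x) (by linarith) hab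
  have e1 : ∫ t in a..b, Real.sqrt ((t-a)*(b-t)) / (x-t)
      = ∫ t in a..b, (fun u => Real.sqrt ((u-a)*(b-u)) / (u-(a+b-x))) (a + b - t) := by
    apply intervalIntegral.integral_congr
    intro t _
    simp only
    have e2 : (a + b - t - a) * (b - (a + b - t)) = (t-a)*(b-t) := by ring
    have e3 : a + b - t - (a + b - x) = x - t := by ring
    rw [e2, e3]
  have e7 := intervalIntegral.integral_comp_sub_left (a := a) (b := b)
    (fun u => Real.sqrt ((u-a)*(b-u)) / (u-(a+b-x))) (a+b)
  rw [e1, e7]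
  simp only [show a+b-b = a from by ring, show a+b-a = b from by ring]
  rw [key]
  have e6 : (a - (a+b-x)) * (b - (a+b-x)) = (x-a)*(x-b) := by ring
  rw [e6]
  ring

lemma stieltjes (A β a b x s u : ℝ) (ha : 0 < a) (hab : a < b) (hbx : b < x)
    (hs : 0 < s) (hu : 0 < u) :
    ∫ t in a..b, (-(1/(x-t)) * ((1/(2*Real.pi)) * Real.sqrt ((t-a)*(b-t)) *
        (A/(t*s) - β/((1+t)*u))))
    = (-(A/(s*x))/2) * ((a+b)/2 - 0 - Real.sqrt ((a-0)*(b-0)))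
      + ((β/(u*(1+x)))/2) * ((a+b)/2 - (-1) - Real.sqrt ((a-(-1))*(b-(-1))))
      + ((-(A/(s*x)) + β/(u*(1+x)))/2) * (x - (a+b)/2 - Real.sqrt ((x-a)*(x-b))) := by
  have hπ : (0:ℝ) < Real.pi := Real.pi_pos
  set w : ℝ → ℝ := fun t => Real.sqrt ((t-a)*(b-t)) with hw
  have hcw : Continuous w := Real.continuous_sqrt.comp (by continuity)
  -- pointwise decomposition
  have hdecomp : ∀ t ∈ uIcc a b,
      (-(1/(x-t)) * ((1/(2*Real.pi)) * w t * (A/(t*s) - β/((1+t)*u))))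
      = (-(A/(s*x))/(2*Real.pi)) * (w t / (t - 0))
        + ((β/(u*(1+x)))/(2*Real.pi)) * (w t / (t - (-1)))
        + ((-(A/(s*x)) + β/(u*(1+x)))/(2*Real.pi)) * (w t / (x - t)) := by
    intro t ht
    rw [uIcc_of_le hab.le] at ht
    have ht0 : 0 < t := lt_of_lt_of_le ha ht.1
    have ht1 : 0 < 1 + t := by linarith
    have htx : 0 < x - t := by have := ht.2; linarith
    have hx0 : 0 < x := by linarith
    have hx1 : 0 < 1 + x := by linarith
    rw [sub_zero, sub_neg_eq_add, add_comm t 1]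
    field_simp
    ring
  rw [intervalIntegral.integral_congr hdecomp]
  -- integrability of the three pieces
  have hi0 : IntervalIntegrable (fun t => w t / (t - 0)) MeasureTheory.volume a b := by
    apply ContinuousOn.intervalIntegrable
    apply ContinuousOn.div hcw.continuousOn (by fun_prop)
    intro t ht
    rw [uIcc_of_le hab.le] at ht
    have : 0 < t := lt_of_lt_of_le ha ht.1
    simp only [sub_zero]
    exact ne_of_gt this
  have hi1 : IntervalIntegrable (fun t => w t / (t - (-1))) MeasureTheory.volume a b := by
    apply ContinuousOn.intervalIntegrable
    apply ContinuousOn.div hcw.continuousOn (by fun_prop)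
    intro t ht
    rw [uIcc_of_le hab.le] at ht
    have : 0 < t := lt_of_lt_of_le ha ht.1
    intro hc
    have : t = -1 := by linarith [sub_eq_zero.mp hc]
    linarith
  have hix : IntervalIntegrable (fun t => w t / (x - t)) MeasureTheory.volume a b := by
    apply ContinuousOn.intervalIntegrable
    apply ContinuousOn.div hcw.continuousOn (by fun_prop)
    intro t ht
    rw [uIcc_of_le hab.le] at ht
    have : 0 < x - t := by have := ht.2; linarith
    exact ne_of_gt this
  rw [intervalIntegral.integral_add (((hi0.const_mul _)).add (hi1.const_mul _)) (hix.const_mul _),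
    intervalIntegral.integral_add (hi0.const_mul _) (hi1.const_mul _),
    intervalIntegral.integral_const_mul, intervalIntegral.integral_const_mul,
    intervalIntegral.integral_const_mul]
  have J0 := baseJ a b 0 ha hab
  have J1 := baseJ a b (-1) (by linarith) hab
  have Jx := baseJx a b x hab hbx
  rw [hw]
  rw [J0, J1, Jx]
  have hπ' : Real.pi ≠ 0 := ne_of_gt hπ
  have hx0 : (0:ℝ) < x := by linarith
  have hx1 : (0:ℝ) < 1 + x := by linarith
  generalize Real.sqrt ((a-0)*(b-0)) = p
  generalize Real.sqrt ((a-(-1))*(b-(-1))) = q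
  generalize Real.sqrt ((x-a)*(x-b)) = R
  field_simp


lemma pos_aux (A β γ a b s u : ℝ) (ha : 0 < a) (hab : a < b) (hγ : 0 < γ)
    (hs : 0 < s) (hu : 0 < u) (hs2 : s^2 = a*b) (hu2 : u^2 = (a+1)*(b+1))
    (h1 : γ + β/u - A/s = 0)
    (h2 : γ*(a+b)/2 - A + β - β/u = 2) :
    ∀ x, b < x → 0 < A + x*s*γ := by
  have hb : 0 < b := ha.trans hab
  have h2s : a + b > 2*s := by nlinarith [sq_nonneg (a-b)]
  have hk' : 0 < u - s - 1 := by nlinarith [sq_nonneg (a-b)]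
  have hbu : β/u = A/s - γ := by linarith
  have hβs : β*s = A*u - γ*s*u := by
    have h1' := h1
    field_simp at h1'
    linarith
  have hAs : A/s*s = A := by field_simp
  have key : A*(u-s-1) + γ*s*((a+b)/2 - u + 1) = 2*s := by
    have h2'' : γ*(a+b)/2 - A + β - (A/s - γ) = 2 := by rw [← hbu]; linarith
    have h2s' : (γ*(a+b)/2 - A + β - (A/s - γ)) * s = 2 * s := by rw [h2'']
    -- expand: γ(a+b)s/2 − As + βs − A + γs = 2s  using hAs and hβs
    nlinarith [h2s', hAs, hβs]
  have hsum : 0 < 2*b - u - s + 1 := by nlinarith [sq_nonneg (a-b), sq_nonneg (a - b)]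
  have hA : (A + b*s*γ)*(u-s-1) = 2*s + γ*s*(u-s-1)*(2*b-u-s+1)/2 := by
    linear_combination key + (γ*s/2)*hu2 - (γ*s/2)*hs2
  have hApos : 0 < A + b*s*γ := by
    nlinarith [hA, hk', hsum, mul_pos (mul_pos (mul_pos hγ hs) hk') hsum]
  intro x hx
  nlinarith [hApos, mul_pos (mul_pos hs hγ) (sub_pos.mpr hx)]

set_option maxHeartbeats 1000000 in
theorem stmt_17 (α β γ a b : ℝ) (ha : 0 < a) (hab : a < b) (hγ : 0 < γ)
    (h1 : γ + β / Real.sqrt ((a + 1) * (b + 1)) - (α - 1) / Real.sqrt (a * b) = 0)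
    (h2 : γ * (a + b) / 2 - α + 1 + β - β / Real.sqrt ((a + 1) * (b + 1)) = 2)
    (V : ℝ → ℝ) (hV : ∀ x, V x = γ * x + β * Real.log (1 + x) - (α - 1) * Real.log x)
    (ρ : ℝ → ℝ)
    (hρ : ∀ x, ρ x = (1 / (2 * Real.pi)) * Real.sqrt ((x - a) * (b - x)) *
      ((α - 1) / (x * Real.sqrt (a * b)) - β / ((1 + x) * Real.sqrt ((a + 1) * (b + 1)))))
    (g : ℝ → ℝ)
    (hg : ∀ x, g x = (∫ t in a..b, Real.log (|x - t|⁻¹) * ρ t) + V x / 2 +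
      (1 / 2) * ∫ t in a..b, V t * ρ t) :
    (∀ x, b < x →
      HasDerivAt g ((1 / 2) * Real.sqrt ((x - a) * (x - b)) *
        ((α - 1) / (x * Real.sqrt (a * b)) -
          β / ((1 + x) * Real.sqrt ((a + 1) * (b + 1))))) x ∧
      0 < (1 / 2) * Real.sqrt ((x - a) * (x - b)) *
        ((α - 1) / (x * Real.sqrt (a * b)) -
          β / ((1 + x) * Real.sqrt ((a + 1) * (b + 1))))) ∧
    StrictMonoOn g (Set.Ioi b) := by
  have hb0 : 0 < b := ha.trans hab
  set s := Real.sqrt (a * b) with hsdef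
  set u := Real.sqrt ((a + 1) * (b + 1)) with hudef
  have hsp : 0 < s := Real.sqrt_pos.mpr (by positivity)
  have hup : 0 < u := Real.sqrt_pos.mpr (by positivity)
  have hs2 : s ^ 2 = a * b := Real.sq_sqrt (by positivity)
  have hu2 : u ^ 2 = (a + 1) * (b + 1) := Real.sq_sqrt (by positivity)
  have hpos := pos_aux (α - 1) β γ a b s u ha hab hγ hsp hup hs2 hu2
    (by linarith) (by linarith)
  -- positivity of the derivative value
  have posval : ∀ x, b < x → 0 < (1 / 2) * Real.sqrt ((x - a) * (x - b)) *
      ((α - 1) / (x * s) - β / ((1 + x) * u)) := by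
    intro x hbx
    have hx0 : 0 < x := hb0.trans hbx
    have hx1 : 0 < 1 + x := by linarith
    have hR : 0 < Real.sqrt ((x - a) * (x - b)) := Real.sqrt_pos.mpr
      (by nlinarith)
    have hβ : β = ((α - 1) / s - γ) * u := by
      have hbu : β / u = (α - 1) / s - γ := by linarith
      calc β = β / u * u := by field_simp
        _ = ((α - 1) / s - γ) * u := by rw [hbu]
    have hf : (α - 1) / (x * s) - β / ((1 + x) * u) = ((α - 1) + x * s * γ) / (s * x * (1 + x)) := by
      rw [hβ]
      field_simp
      ring
    rw [hf]
    have := hpos x hbx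
    positivity
  -- main derivative computation
  have main : ∀ x, b < x → HasDerivAt g ((1 / 2) * Real.sqrt ((x - a) * (x - b)) *
      ((α - 1) / (x * s) - β / ((1 + x) * u))) x := by
    intro x hbx
    have hx0 : 0 < x := hb0.trans hbx
    have hx1 : 0 < 1 + x := by linarith
    -- derivative of V
    have hVd : HasDerivAt V (γ + β * (1 / (1 + x)) - (α - 1) * x⁻¹) x := by
      have hVfun : V = fun y => γ * y + β * Real.log (1 + y) - (α - 1) * Real.log y :=
        funext hV
      rw [hVfun]
      have d1 : HasDerivAt (fun y : ℝ => γ * y) γ x := by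
        simpa using (hasDerivAt_id x).const_mul γ
      have d2 : HasDerivAt (fun y : ℝ => Real.log (1 + y)) (1 / (1 + x)) x := by
        have h0 : HasDerivAt (fun y : ℝ => 1 + y) 1 x := by
          simpa using (hasDerivAt_id x).const_add (1 : ℝ)
        simpa using h0.log (by positivity)
      have d3 : HasDerivAt Real.log x⁻¹ x := Real.hasDerivAt_log (ne_of_gt hx0)
      exact (d1.add (d2.const_mul β)).sub (d3.const_mul (α - 1))
    -- continuity of ρ on [a,b]
    have hρcont : ContinuousOn ρ (Icc a b) := by
      have hρfun : ρ = fun t => (1 / (2 * Real.pi)) * Real.sqrt ((t - a) * (b - t)) *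
          ((α - 1) / (t * s) - β / ((1 + t) * u)) := funext hρ
      rw [hρfun]
      apply ContinuousOn.mul
      · exact (continuous_const.mul (Real.continuous_sqrt.comp (by continuity))).continuousOn
      · apply ContinuousOn.sub
        · apply ContinuousOn.div continuousOn_const (by fun_prop)
          intro t ht
          have : 0 < t := lt_of_lt_of_le ha ht.1
          positivity
        · apply ContinuousOn.div continuousOn_const (by fun_prop)
          intro t ht
          have : 0 < t := lt_of_lt_of_le ha ht.1
          positivity
    set ε := (x - b) / 2 with hεdef
    have hε : 0 < ε := by rw [hεdef]; linarith
    have hbx2 : b = x - 2 * ε := by rw [hεdef]; ring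
    -- setup for dominated differentiation
    have meas_ev : ∀ᶠ y in nhds x, MeasureTheory.AEStronglyMeasurable
        (fun t => Real.log (|y - t|⁻¹) * ρ t) (MeasureTheory.volume.restrict (Set.uIoc a b)) := by
      apply Filter.eventually_of_mem (Metric.ball_mem_nhds x hε)
      intro y hy
      have hy' : |y - x| < ε := by simpa [Real.dist_eq] using hy
      apply ContinuousOn.aestronglyMeasurable _ measurableSet_uIoc
      rw [uIoc_of_le hab.le]
      apply ContinuousOn.mul _ (hρcont.mono Ioc_subset_Icc_self)
      apply ContinuousOn.log
      · apply ContinuousOn.inv₀ (by fun_prop)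
        intro t ht
        have : 0 < y - t := by
          rcases abs_lt.mp hy' with ⟨h1', h2'⟩
          have := ht.2
          nlinarith [hbx2]
        positivity
      · intro t ht
        have h' : 0 < y - t := by
          rcases abs_lt.mp hy' with ⟨h1', h2'⟩
          have := ht.2
          nlinarith [hbx2]
        have : 0 < |y - t|⁻¹ := by positivity
        positivity
    have int_x : IntervalIntegrable (fun t => Real.log (|x - t|⁻¹) * ρ t)
        MeasureTheory.volume a b := by
      apply ContinuousOn.intervalIntegrable
      rw [uIcc_of_le hab.le]
      apply ContinuousOn.mul _ hρcont
      apply ContinuousOn.log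
      · apply ContinuousOn.inv₀ (by fun_prop)
        intro t ht
        have : 0 < x - t := by have := ht.2; linarith
        positivity
      · intro t ht
        have h' : 0 < x - t := by have := ht.2; linarith
        have : 0 < |x - t|⁻¹ := by positivity
        positivity
    have meas_F' : MeasureTheory.AEStronglyMeasurable (fun t => -(1 / (x - t)) * ρ t)
        (MeasureTheory.volume.restrict (Set.uIoc a b)) := by
      apply ContinuousOn.aestronglyMeasurable _ measurableSet_uIoc
      rw [uIoc_of_le hab.le]
      apply ContinuousOn.mul _ (hρcont.mono Ioc_subset_Icc_self)
      apply ContinuousOn.neg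
      apply ContinuousOn.div continuousOn_const (by fun_prop)
      intro t ht
      have : 0 < x - t := by have := ht.2; linarith
      positivity
    have bnd : ∀ᵐ t ∂(MeasureTheory.volume), t ∈ Set.uIoc a b →
        ∀ y ∈ Metric.ball x ε, ‖-(1 / (y - t)) * ρ t‖ ≤ |ρ t| / ε := by
      apply Filter.Eventually.of_forall
      intro t ht y hy
      rw [uIoc_of_le hab.le] at ht
      have hy' : |y - x| < ε := by simpa [Real.dist_eq] using hy
      have hyt : ε ≤ y - t := by
        rcases abs_lt.mp hy' with ⟨h1', h2'⟩
        have := ht.2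
        nlinarith [hbx2]
      have hyt0 : 0 < y - t := lt_of_lt_of_le hε hyt
      rw [Real.norm_eq_abs, abs_mul, abs_neg, abs_of_pos (by positivity : (0:ℝ) < 1 / (y - t))]
      calc 1 / (y - t) * |ρ t| ≤ 1 / ε * |ρ t| := by
            apply mul_le_mul_of_nonneg_right _ (abs_nonneg _)
            exact one_div_le_one_div_of_le hε hyt
        _ = |ρ t| / ε := by ring
    have bndint : IntervalIntegrable (fun t => |ρ t| / ε) MeasureTheory.volume a b := by
      apply ContinuousOn.intervalIntegrable
      rw [uIcc_of_le hab.le]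
      exact (hρcont.abs).div_const ε
    have deriv_ae : ∀ᵐ t ∂(MeasureTheory.volume), t ∈ Set.uIoc a b →
        ∀ y ∈ Metric.ball x ε, HasDerivAt (fun y => Real.log (|y - t|⁻¹) * ρ t)
          (-(1 / (y - t)) * ρ t) y := by
      apply Filter.Eventually.of_forall
      intro t ht y hy
      rw [uIoc_of_le hab.le] at ht
      have hy' : |y - x| < ε := by simpa [Real.dist_eq] using hy
      have hyt0 : 0 < y - t := by
        rcases abs_lt.mp hy' with ⟨h1', h2'⟩
        have := ht.2
        nlinarith [hbx2]
      have base : HasDerivAt (fun y' : ℝ => -Real.log (y' - t) * ρ t)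
          (-(1 / (y - t)) * ρ t) y := by
        have h0 : HasDerivAt (fun y' : ℝ => y' - t) 1 y := (hasDerivAt_id y).sub_const t
        have h1' : HasDerivAt (fun y' : ℝ => Real.log (y' - t)) (1 / (y - t)) y := by
          simpa using h0.log (ne_of_gt hyt0)
        exact h1'.neg.mul_const (ρ t)
      apply base.congr_of_eventuallyEq
      have hopen : ∀ᶠ y' in nhds y, y' ∈ Metric.ball x ε :=
        Metric.isOpen_ball.mem_nhds hy
      filter_upwards [hopen] with y' hy'2
      have hy'3 : |y' - x| < ε := by simpa [Real.dist_eq] using hy'2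
      have hyt0' : 0 < y' - t := by
        rcases abs_lt.mp hy'3 with ⟨h1', h2'⟩
        have := ht.2
        nlinarith [hbx2]
      rw [abs_of_pos hyt0', Real.log_inv]
    obtain ⟨-, hDI⟩ := intervalIntegral.hasDerivAt_integral_of_dominated_loc_of_deriv_le
      (𝕜 := ℝ) (F := fun y t => Real.log (|y - t|⁻¹) * ρ t)
      (F' := fun y t => -(1 / (y - t)) * ρ t) (bound := fun t => |ρ t| / ε)
      (Metric.ball_mem_nhds x hε) meas_ev int_x meas_F' bnd bndint deriv_ae
    -- assemble
    have hgfun : g = fun y => (∫ t in a..b, Real.log (|y - t|⁻¹) * ρ t) + V y / 2 +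
        (1 / 2) * ∫ t in a..b, V t * ρ t := funext hg
    have htotal : HasDerivAt g ((∫ t in a..b, -(1 / (x - t)) * ρ t) +
        (γ + β * (1 / (1 + x)) - (α - 1) * x⁻¹) / 2) x := by
      rw [hgfun]
      exact (hDI.add (hVd.div_const 2)).add_const _
    have hval : (∫ t in a..b, -(1 / (x - t)) * ρ t)
        = (-((α - 1) / (s * x)) / 2) * ((a + b) / 2 - 0 - Real.sqrt ((a - 0) * (b - 0)))
          + ((β / (u * (1 + x))) / 2) * ((a + b) / 2 - (-1) - Real.sqrt ((a - (-1)) * (b - (-1))))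
          + ((-((α - 1) / (s * x)) + β / (u * (1 + x))) / 2) *
              (x - (a + b) / 2 - Real.sqrt ((x - a) * (x - b))) := by
      have hfun : (fun t => -(1 / (x - t)) * ρ t)
          = fun t => -(1 / (x - t)) * ((1 / (2 * Real.pi)) * Real.sqrt ((t - a) * (b - t)) *
              ((α - 1) / (t * s) - β / ((1 + t) * u))) := by
        funext t
        rw [hρ t]
      rw [hfun]
      exact stieltjes (α - 1) β a b x s u ha hab hbx hsp hup
    have e0 : Real.sqrt ((a - 0) * (b - 0)) = s := by
      rw [hsdef]; norm_num
    have e1 : Real.sqrt ((a - (-1)) * (b - (-1))) = u := by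
      rw [hudef]; congr 1; ring
    have hfinal : (-((α - 1) / (s * x)) / 2) * ((a + b) / 2 - 0 - s)
          + ((β / (u * (1 + x))) / 2) * ((a + b) / 2 - (-1) - u)
          + ((-((α - 1) / (s * x)) + β / (u * (1 + x))) / 2) *
              (x - (a + b) / 2 - Real.sqrt ((x - a) * (x - b)))
          + (γ + β * (1 / (1 + x)) - (α - 1) * x⁻¹) / 2
        = (1 / 2) * Real.sqrt ((x - a) * (x - b)) *
            ((α - 1) / (x * s) - β / ((1 + x) * u)) := by
      have hγeq : γ = (α - 1) / s - β / u := by linarith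
      rw [hγeq]
      generalize Real.sqrt ((x - a) * (x - b)) = R
      field_simp
      ring
    rw [hval, e0, e1] at htotal
    rw [← hfinal]
    convert htotal using 1
  refine ⟨fun x hbx => ⟨main x hbx, posval x hbx⟩, ?_⟩
  apply strictMonoOn_of_deriv_pos (convex_Ioi b)
  · intro x hx
    exact (main x hx).continuousAt.continuousWithinAt
  · intro x hx
    rw [interior_Ioi] at hx
    rw [(main x hx).deriv]
    exact posval x hx
end
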